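/- arXiv:2104.08346 — 3 statements merged into one kernel-verified Lean document; each statement's English description precedes it below -/
import Mathlib

section
/- (Discrete energy conservation for the leapfrog scheme) Let eⁿ ∈ V satisfy m(Δt⁻²(e^{n+1} − 2eⁿ + e^{n−1}), w) + a(eⁿ, w) = m(Fⁿ, w) for all w ∈ V, with m, a symmetric bilinear forms. Define the discrete energy Eⁿ = ½ m(D_{Δt} eⁿ, D_{Δt} eⁿ) + ½ a(e^{n−1}, eⁿ), where D_{Δt} eⁿ = Δt⁻¹(eⁿ − e^{n−1}). Then E^{n+1} − Eⁿ = ½ Δt · m(Fⁿ, D_{Δt} e^{n+1} + D_{Δt} eⁿ). -/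
/-- Discrete energy identity for the leapfrog scheme: if
`m(Δt⁻²(e^{n+1} − 2eⁿ + e^{n−1}), w) + a(eⁿ, w) = m(Fⁿ, w)` for all `w`, then the
discrete energy `Eⁿ = ½ m(D eⁿ, D eⁿ) + ½ a(e^{n−1}, eⁿ)` satisfies
`E^{n+1} − Eⁿ = ½ Δt m(Fⁿ, D e^{n+1} + D eⁿ)`, where `D eⁿ = Δt⁻¹(eⁿ − e^{n−1})`. -/
theorem stmt9
    (V : Type) [AddCommGroup V] [Module ℝ V]
    (m a : V →ₗ[ℝ] V →ₗ[ℝ] ℝ)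
    (hmsymm : ∀ v w, m v w = m w v) (hasymm : ∀ v w, a v w = a w v)
    (Δt : ℝ) (hΔt : 0 < Δt)
    (e F : ℕ → V)
    (hscheme : ∀ n, 1 ≤ n → ∀ w,
      m ((Δt ^ 2)⁻¹ • (e (n + 1) - (2 : ℝ) • e n + e (n - 1))) w + a (e n) w = m (F n) w)
    (D : ℕ → V) (hD : ∀ n, D n = Δt⁻¹ • (e n - e (n - 1)))
    (En : ℕ → ℝ)
    (hEn : ∀ n, En n = (1 / 2) * m (D n) (D n) + (1 / 2) * a (e (n - 1)) (e n)) :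
    ∀ n, 1 ≤ n →
      En (n + 1) - En n = (1 / 2) * Δt * m (F n) (D (n + 1) + D n) := by
  intro n hn
  have hne : Δt ≠ 0 := ne_of_gt hΔt
  have h1 : Δt * Δt⁻¹ = 1 := mul_inv_cancel₀ hne
  have h2 : ((Δt : ℝ) ^ 2)⁻¹ = Δt⁻¹ * Δt⁻¹ := by rw [sq, mul_inv]
  have hw := hscheme n hn (e (n + 1) - e (n - 1))
  simp only [hEn, hD, Nat.add_sub_cancel, map_sub, map_add, map_smul,
    LinearMap.sub_apply, LinearMap.add_apply, LinearMap.smul_apply, smul_eq_mul, h2] at hw ⊢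
  linear_combination (1/2) * hw
    - (1/2) * (Δt⁻¹ * Δt⁻¹) * hmsymm (e (n+1)) (e n)
    + (1/2) * (Δt⁻¹ * Δt⁻¹) * hmsymm (e (n-1)) (e n)
    + (1/2) * (Δt⁻¹ * Δt⁻¹) * hmsymm (e (n+1)) (e (n-1))
    + (1/2) * hasymm (e n) (e (n-1))
    - (1/2) * (m (F n) (e (n+1)) - m (F n) (e (n-1))) * h1
end

section
/- (Positivity of the leapfrog discrete energy under a CFL condition) Let m, a be symmetric bilinear forms on a finite-dimensional space V with m positive definite and a positive semidefinite, and suppose a(v,v) ≤ K m(v,v) for all v ∈ V. If the time step satisfies 1 − ½ K Δt² ≥ δ > 0, then the discrete energy Eⁿ = ½ m(D_{Δt}eⁿ, D_{Δt}eⁿ) + ½ a(e^{n−1}, eⁿ) satisfies Eⁿ ≥ (δ/2) m(D_{Δt}eⁿ, D_{Δt}eⁿ) + ¼ a(eⁿ, eⁿ) + ¼ a(e^{n−1}, e^{n−1}) ≥ 0. -/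
/-- Positivity of the leapfrog discrete energy under the CFL condition
`1 − ½ K Δt² ≥ δ > 0`, where `a(v,v) ≤ K m(v,v)`. -/
theorem stmt10
    (V : Type) [AddCommGroup V] [Module ℝ V] [FiniteDimensional ℝ V]
    (m a : V →ₗ[ℝ] V →ₗ[ℝ] ℝ)
    (hmsymm : ∀ v w, m v w = m w v) (hasymm : ∀ v w, a v w = a w v)
    (hmpd : ∀ v, v ≠ 0 → 0 < m v v) (hmnn : ∀ v, 0 ≤ m v v)
    (hapsd : ∀ v, 0 ≤ a v v)
    (K Δt δ : ℝ) (hK : 0 ≤ K) (hΔt : 0 < Δt) (hδ : 0 < δ)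
    (hbound : ∀ v, a v v ≤ K * m v v)
    (hCFL : δ ≤ 1 - (1 / 2) * K * Δt ^ 2)
    (eprev ecur : V)
    (D : V) (hD : D = Δt⁻¹ • (ecur - eprev))
    (En : ℝ) (hEn : En = (1 / 2) * m D D + (1 / 2) * a eprev ecur) :
    (δ / 2) * m D D + (1 / 4) * a ecur ecur + (1 / 4) * a eprev eprev ≤ En ∧
    0 ≤ En := by
  set d := ecur - eprev with hd'
  have hpol : a d d = a ecur ecur - 2 * a eprev ecur + a eprev eprev := by
    simp only [hd', map_sub, LinearMap.sub_apply]
    rw [hasymm ecur eprev]; ring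
  have hmDD : m D D = Δt⁻¹ * (Δt⁻¹ * m d d) := by
    rw [hD]
    simp [map_smul, LinearMap.smul_apply, smul_eq_mul]
  have hmd : m d d = Δt ^ 2 * m D D := by
    rw [hmDD]
    field_simp
  have hbd : a d d ≤ K * (Δt ^ 2 * m D D) := by
    rw [← hmd]; exact hbound d
  have hmnnD := hmnn D
  have hδm : 0 ≤ (δ / 2) * m D D := by positivity
  have hac := hapsd ecur
  have hap := hapsd eprev
  constructor
  · nlinarith [mul_nonneg (sub_nonneg.2 hCFL) hmnnD]
  · nlinarith [mul_nonneg (sub_nonneg.2 hCFL) hmnnD]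
end

section
/- (Nodal average projection formula) Let Π^av_H : U^D_{H,1} → U_H be defined by b'_H(Π^av_H u, w) = b'_H(u, w) for all w ∈ U_H, where b'_H(u,w) = Σ_e ∫_e β I_e(uw) dx. Then Π^av_H is an orthogonal projection with respect to b'_H, and its value at an interior node x_i is the weighted average (Π^av_H u)(x_i) = [Σ_{e : x_i ∈ ē} (∫_e β φ_i dx) u_e(x_i)] / ∫_Ω β φ_i dx, where u_e = u|_e and φ_i is the nodal basis function at x_i. -/
/-- Nodal average projection formula. Elements of the discontinuous space `U^D_{H,1}`
are recorded by their nodal values per element, `u e i = u_e(x_i)`; conforming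
functions are embeddings `emb c` of nodal vectors `c : ι → ℝ`. With the lumped form
`b'_H(u,v) = Σ_e Σ_i w e i · u_e(x_i) · v_e(x_i)`, where `w e i = ∫_e β φ_i dx ≥ 0`
and `ω i = Σ_e w e i = ∫_Ω β φ_i dx > 0`, the operator `Πav` defined by
`b'_H(Πav u, w) = b'_H(u, w)` for all conforming `w` is an orthogonal projection
(it fixes conforming functions) and is given nodewise by the weighted average
`(Πav u)(x_i) = (Σ_{e : x_i ∈ ē} (∫_e β φ_i) u_e(x_i)) / ∫_Ω β φ_i`. -/
theorem stmt19
    (ι Elem : Type) [Fintype ι] [Fintype Elem] [DecidableEq ι]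
    (w : Elem → ι → ℝ) (hw : ∀ e i, 0 ≤ w e i)
    (hω : ∀ i, 0 < ∑ e, w e i)
    (bH : (Elem → ι → ℝ) → (Elem → ι → ℝ) → ℝ)
    (hbH : ∀ u v, bH u v = ∑ e, ∑ i, w e i * u e i * v e i)
    (emb : (ι → ℝ) → (Elem → ι → ℝ)) (hemb : ∀ c e i, emb c e i = c i)
    (Piav : (Elem → ι → ℝ) →ₗ[ℝ] (ι → ℝ))
    (hdef : ∀ u c, bH (emb (Piav u)) (emb c) = bH u (emb c)) :
    -- Πav is a projection (fixes the conforming space) …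
    (∀ c, Piav (emb c) = c) ∧
    -- … and its value at each node is the β-weighted average of the element values
    (∀ u i, Piav u i = (∑ e, w e i * u e i) / (∑ e, w e i)) := by
  have key : ∀ u i, Piav u i = (∑ e, w e i * u e i) / (∑ e, w e i) := by
    intro u i
    have h := hdef u (Pi.single i (1:ℝ))
    simp only [hbH, hemb] at h
    have L : ∀ (v : Elem → ι → ℝ),
        (∑ e, ∑ j, w e j * v e j * (Pi.single i 1 : ι → ℝ) j) = ∑ e, w e i * v e i := by
      intro v
      refine Finset.sum_congr rfl fun e _ => ?_
      rw [Finset.sum_eq_single i]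
      · simp
      · intro j _ hj; simp [Pi.single_eq_of_ne hj]
      · simp
    have h1 : (∑ e, w e i) * Piav u i = ∑ e, w e i * u e i := by
      have := (L (fun e j => Piav u j)).symm.trans (h.trans (L u))
      rw [← this, Finset.sum_mul]
    field_simp [(hω i).ne']
    linarith [h1]
  refine ⟨fun c => ?_, key⟩
  funext i
  rw [key (emb c) i]
  simp only [hemb]
  rw [← Finset.sum_mul, mul_comm, mul_div_assoc, div_self (hω i).ne', mul_one]
end
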